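/- Let R = {(t, 0) : t ≥ 0} ⊆ ℝ². If f is any simple tropical polynomial in two variables whose corner locus Z(f) contains R, then Z(f) contains the entire horizontal line {(t, 0) : t ∈ ℝ}. Consequently, there is no finite family of simple tropical polynomials in two variables whose common corner locus equals R. -/
import Mathlib


/-- A tropical polynomial in `n` variables: a finite nonempty set of exponent
vectors in `ℕⁿ` together with real coefficients. -/
structure TropPoly (n : ℕ) where
  supp : Finset (Fin n → ℕ)
  supp_nonempty : supp.Nonempty
  coeff : (Fin n → ℕ) → ℝ

namespace TropPoly

variable {n : ℕ}

/-- The value at `u` of the monomial of exponent `ω`. -/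
def mono (f : TropPoly n) (ω : Fin n → ℕ) (u : Fin n → ℝ) : ℝ :=
  (∑ i, (ω i : ℝ) * u i) + f.coeff ω

/-- The piecewise-linear convex function defined by a tropical polynomial:
`f(u) = max_{ω ∈ Ω} (⟨ω, u⟩ + A(ω))`. -/
def eval (f : TropPoly n) (u : Fin n → ℝ) : ℝ :=
  f.supp.sup' f.supp_nonempty (fun ω => f.mono ω u)

/-- The corner locus of a tropical polynomial: the set of points where the
maximum is attained by at least two distinct exponent vectors. -/
def Z (f : TropPoly n) : Set (Fin n → ℝ) :=
  {u | ∃ ω ∈ f.supp, ∃ τ ∈ f.supp, ω ≠ τ ∧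
    f.mono ω u = f.eval u ∧ f.mono τ u = f.eval u}

/-- A tropical polynomial is simple if every exponent vector has at most one
nonzero coordinate (i.e., all monomials are univariate or constant). -/
def Simple (f : TropPoly n) : Prop :=
  ∀ ω ∈ f.supp, ∀ i j : Fin n, ω i ≠ 0 → ω j ≠ 0 → i = j

end TropPoly

namespace TropPoly

lemma mono_line (f : TropPoly 2) (ω : Fin 2 → ℕ) (u : Fin 2 → ℝ) (hu : u 1 = 0) :
    f.mono ω u = (ω 0 : ℝ) * u 0 + f.coeff ω := by
  simp [mono, Fin.sum_univ_two, hu]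

lemma le_eval (f : TropPoly 2) {ω} (hω : ω ∈ f.supp) (u) : f.mono ω u ≤ f.eval u :=
  Finset.le_sup' (fun τ => f.mono τ u) hω

lemma eval_mono_line (f : TropPoly 2) {u v : Fin 2 → ℝ} (hu : u 1 = 0) (hv : v 1 = 0)
    (h : u 0 ≤ v 0) : f.eval u ≤ f.eval v := by
  apply Finset.sup'_le
  intro ω hω
  refine le_trans ?_ (f.le_eval hω v)
  rw [mono_line f ω u hu, mono_line f ω v hv]
  have h2 : (ω 0 : ℝ) * u 0 ≤ (ω 0 : ℝ) * v 0 :=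
    mul_le_mul_of_nonneg_left h (by positivity)
  linarith

end TropPoly

/-- If the corner locus of a simple tropical polynomial in two variables contains
the horizontal ray `{(t,0) : t ≥ 0}`, then it contains the whole horizontal line;
consequently, no finite family of simple tropical polynomials has the ray as its
common corner locus. -/
theorem TropPoly.ray_not_simple :
    (∀ f : TropPoly 2, f.Simple →
      {u : Fin 2 → ℝ | 0 ≤ u 0 ∧ u 1 = 0} ⊆ f.Z →
      {u : Fin 2 → ℝ | u 1 = 0} ⊆ f.Z) ∧
    ¬ ∃ (s : ℕ) (f : Fin s → TropPoly 2), (∀ i, (f i).Simple) ∧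
        (⋂ i, (f i).Z) = {u : Fin 2 → ℝ | 0 ≤ u 0 ∧ u 1 = 0} := by
  have main : ∀ f : TropPoly 2, f.Simple →
      {u : Fin 2 → ℝ | 0 ≤ u 0 ∧ u 1 = 0} ⊆ f.Z →
      {u : Fin 2 → ℝ | u 1 = 0} ⊆ f.Z := by
    intro f hs hray u hu
    simp only [Set.mem_setOf_eq] at hu
    by_cases h0 : 0 ≤ u 0
    · exact hray ⟨h0, hu⟩
    push_neg at h0
    have hpt : ∀ k : ℕ, (![(k:ℝ), 0]) ∈ f.Z := fun k =>
      hray ⟨by simp, by simp⟩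
    choose ω hω τ hτ hne h1 h2 using hpt
    set F : ℕ → ↥f.supp × ↥f.supp := fun k => (⟨ω k, hω k⟩, ⟨τ k, hτ k⟩) with hF
    obtain ⟨a, b, hab, hEq⟩ := Finite.exists_ne_map_eq_of_infinite F
    have hωab : ω a = ω b := congrArg (fun p => (p.1 : Fin 2 → ℕ)) hEq
    have hτab : τ a = τ b := congrArg (fun p => (p.2 : Fin 2 → ℕ)) hEq
    -- mono values at the two integer points
    have hl : ∀ k : ℕ, (![(k:ℝ), 0] : Fin 2 → ℝ) 1 = 0 := fun k => by simp
    have e1a : (ω a 0 : ℝ) * a + f.coeff (ω a) = f.eval ![(a:ℝ), 0] := by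
      have := h1 a; rw [mono_line f (ω a) _ (hl a)] at this; simpa using this
    have e2a : (τ a 0 : ℝ) * a + f.coeff (τ a) = f.eval ![(a:ℝ), 0] := by
      have := h2 a; rw [mono_line f (τ a) _ (hl a)] at this; simpa using this
    have e1b : (ω a 0 : ℝ) * b + f.coeff (ω a) = f.eval ![(b:ℝ), 0] := by
      have := h1 b; rw [mono_line f (ω b) _ (hl b)] at this
      rw [hωab]; simpa using this
    have e2b : (τ a 0 : ℝ) * b + f.coeff (τ a) = f.eval ![(b:ℝ), 0] := by
      have := h2 b; rw [mono_line f (τ b) _ (hl b)] at this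
      rw [hτab]; simpa using this
    -- deduce equal first coordinates
    have hslope : (ω a 0 : ℝ) = (τ a 0 : ℝ) := by
      have hne' : (a : ℝ) ≠ (b : ℝ) := by exact_mod_cast hab
      have : (ω a 0 : ℝ) * ((a : ℝ) - b) = (τ a 0 : ℝ) * ((a : ℝ) - b) := by ring_nf; linarith
      exact mul_right_cancel₀ (sub_ne_zero.mpr hne') this
    have hslope' : ω a 0 = τ a 0 := by exact_mod_cast hslope
    -- simplicity forces zero slope
    have hzero : ω a 0 = 0 := by
      by_contra hz
      have hω1 : ω a 1 = 0 := by
        by_contra hz1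
        exact absurd (hs (ω a) (hω a) 0 1 hz hz1) (by decide)
      have hτ0 : τ a 0 ≠ 0 := hslope' ▸ hz
      have hτ1 : τ a 1 = 0 := by
        by_contra hz1
        exact absurd (hs (τ a) (hτ a) 0 1 hτ0 hz1) (by decide)
      apply hne a
      funext i
      fin_cases i
      · exact hslope'
      · show ω a 1 = τ a 1
        rw [hω1, hτ1]
    have hzeroτ : τ a 0 = 0 := hslope' ▸ hzero
    -- coefficients equal eval at point a
    have hAω : f.coeff (ω a) = f.eval ![(a:ℝ), 0] := by
      rw [← e1a, hzero]; simp
    have hAτ : f.coeff (τ a) = f.eval ![(a:ℝ), 0] := by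
      rw [← e2a, hzeroτ]; simp
    -- eval at u is squeezed
    have hle : f.eval u ≤ f.eval ![(a:ℝ), 0] :=
      f.eval_mono_line hu (hl a)
        (by rw [Matrix.cons_val_zero]; exact le_trans h0.le (Nat.cast_nonneg a))
    have hmω : f.mono (ω a) u = f.coeff (ω a) := by
      rw [mono_line f _ u hu, hzero]; simp
    have hmτ : f.mono (τ a) u = f.coeff (τ a) := by
      rw [mono_line f _ u hu, hzeroτ]; simp
    have hgeω := f.le_eval (hω a) u
    have hgeτ := f.le_eval (hτ a) u
    refine ⟨ω a, hω a, τ a, hτ a, hne a, ?_, ?_⟩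
    · rw [hmω]; linarith [hmω, hAω]
    · rw [hmτ]; linarith [hmτ, hAτ]
  refine ⟨main, ?_⟩
  rintro ⟨s, f, hsimp, hZ⟩
  have hline : (![(-1:ℝ), 0]) ∈ ⋂ i, (f i).Z := by
    rw [Set.mem_iInter]
    intro i
    have hray : {u : Fin 2 → ℝ | 0 ≤ u 0 ∧ u 1 = 0} ⊆ (f i).Z := by
      rw [← hZ]; exact Set.iInter_subset _ i
    exact main (f i) (hsimp i) hray (by simp)
  rw [hZ] at hline
  have : (0:ℝ) ≤ -1 := by simpa using hline.1
  linarith
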